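/- For every natural number m ≥ 16 there exist two distinct primes ℓ and s such that 2ℓ > m, ℓ + 3 ≤ m, 2s > m and s + 3 ≤ m; that is, there are at least two distinct primes in the interval (m/2, m − 3]. -/

import Mathlib

open Real

namespace TwoPrimes


theorem real_main_inequality2 {x : ℝ} (x_large : (800 : ℝ) ≤ x) :
    x * (2 * x) ^ √(2 * x) * (2 * x) ^ (2 : ℝ) * 4 ^ (2 * x / 3) ≤ 4 ^ x := by
  let f : ℝ → ℝ := fun x => log x + √(2 * x) * log (2 * x) + 2 * log (2 * x) - log 4 / 3 * x
  have hf' : ∀ x : ℝ, 0 < x → 0 < x * (2 * x) ^ √(2 * x) * (2 * x) ^ (2 : ℝ) / 4 ^ (x / 3) := by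
    intro x h; positivity
  have hf : ∀ x : ℝ, 0 < x → f x = log (x * (2 * x) ^ √(2 * x) * (2 * x) ^ (2 : ℝ) / 4 ^ (x / 3)) := by
    intro x h5
    have h6 : (0:ℝ) < 2 * x := by linarith
    have h7 := rpow_pos_of_pos h6 (√(2 * x))
    have h8 := rpow_pos_of_pos h6 (2 : ℝ)
    rw [log_div (by positivity) (rpow_pos_of_pos four_pos _).ne',
      log_mul (by positivity) h8.ne', log_mul h5.ne' h7.ne',
      log_rpow h6, log_rpow h6, log_rpow zero_lt_four]
    ring
  have h5 : 0 < x := by linarith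
  have key : x * (2 * x) ^ √(2 * x) * (2 * x) ^ (2 : ℝ) / 4 ^ (x / 3) ≤ 1 := by
    rw [← log_nonpos_iff (hf' x h5).le, ← hf x h5]
    have h : ConcaveOn ℝ (Set.Ioi 0.5) f := by
      apply ConcaveOn.sub
      · apply ConcaveOn.add
        · apply ConcaveOn.add
          · exact strictConcaveOn_log_Ioi.concaveOn.subset
              (Set.Ioi_subset_Ioi (by norm_num)) (convex_Ioi 0.5)
          · convert ((strictConcaveOn_sqrt_mul_log_Ioi.concaveOn.comp_linearMap
              ((2 : ℝ) • LinearMap.id))) using 1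
            case e'_9 => rfl
            case e'_7 => rfl
            case e'_12 => rfl
            ext x
            simp only [Set.mem_Ioi, Set.mem_preimage, LinearMap.smul_apply,
              LinearMap.id_coe, id_eq, smul_eq_mul]
            rw [← mul_lt_mul_iff_right₀ (two_pos)]
            norm_num1
            rfl
        · have hlog2x : ConcaveOn ℝ (Set.Ioi (0.5:ℝ)) (fun x : ℝ => log (2 * x)) := by
            have h0 := (strictConcaveOn_log_Ioi.concaveOn.comp_linearMap
              ((2 : ℝ) • LinearMap.id))
            refine (h0.subset (fun y hy => ?_) (convex_Ioi _))
            simp only [Set.mem_Ioi, Set.mem_preimage, LinearMap.smul_apply,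
              LinearMap.id_coe, id_eq, smul_eq_mul] at *
            linarith
          exact hlog2x.smul (by norm_num : (0:ℝ) ≤ 2)
      · apply ConvexOn.smul
        · refine div_nonneg (log_nonneg (by norm_num1)) (by norm_num1)
        · exact convexOn_id (convex_Ioi (0.5 : ℝ))
    suffices h2 : ∃ x1 x2, 0.5 < x1 ∧ x1 < x2 ∧ x2 ≤ x ∧ 0 ≤ f x1 ∧ f x2 ≤ 0 by
      obtain ⟨x1, x2, h1, h2, h0, h3, h4⟩ := h2
      exact (h.right_le_of_le_left'' h1 ((h1.trans h2).trans_le h0) h2 h0 (h4.trans h3)).trans h4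
    refine ⟨18, 800, by norm_num1, by norm_num1, x_large, ?_, ?_⟩
    · have : √(2 * 18 : ℝ) = 6 := (sqrt_eq_iff_mul_self_eq_of_pos (by norm_num1)).mpr (by norm_num1)
      rw [hf _ (by norm_num1), log_nonneg_iff (by positivity), this, one_le_div (by positivity)]
      rw [show ((2:ℝ) * 18) = 36 by norm_num, show ((18:ℝ) / 3) = 6 by norm_num]
      rw [show (6:ℝ) = ((6:ℕ):ℝ) by norm_num, rpow_natCast, rpow_natCast,
        show (2:ℝ) = ((2:ℕ):ℝ) by norm_num, rpow_natCast]
      norm_num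
    · have h40 : √(2 * 800 : ℝ) = 40 :=
        (sqrt_eq_iff_mul_self_eq_of_pos (by norm_num1)).mpr (by norm_num1)
      rw [hf _ (by norm_num1), log_nonpos_iff (hf' _ (by norm_num1)).le, h40,
        div_le_one (by positivity)]
      have hexp : (4:ℝ) ^ ((266:ℕ) : ℝ) ≤ 4 ^ ((800:ℝ) / 3) :=
        rpow_le_rpow_of_exponent_le (by norm_num) (by norm_num)
      refine le_trans ?_ (le_trans (by rw [rpow_natCast]) hexp)
      rw [show ((2:ℝ) * 800) = 1600 by norm_num,
        show (40:ℝ) = ((40:ℕ):ℝ) by norm_num, rpow_natCast,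
        show (2:ℝ) = ((2:ℕ):ℝ) by norm_num, rpow_natCast]
      norm_num
      exact_mod_cast (show (299315535325368917648114653740294762425534984801484800000000000000000000000000000000000000000000000000000000000000000000000000000000000000:ℕ) ≤ 4 ^ 266 by decide)
  have hsplit : (4:ℝ) ^ x = 4 ^ (x / 3) * 4 ^ (2 * x / 3) := by
    rw [← rpow_add four_pos]; ring_nf
  rw [div_le_one (by positivity)] at key
  calc x * (2 * x) ^ √(2 * x) * (2 * x) ^ (2 : ℝ) * 4 ^ (2 * x / 3)
      ≤ 4 ^ (x / 3) * 4 ^ (2 * x / 3) := by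
        exact mul_le_mul_of_nonneg_right key (by positivity)
    _ = 4 ^ x := hsplit.symm


theorem main_inequality2 {n : ℕ} (n_large : 800 ≤ n) :
    n * (2 * n) ^ Nat.sqrt (2 * n) * (2 * n) ^ 2 * 4 ^ (2 * n / 3) ≤ 4 ^ n := by
  rw [← @Nat.cast_le ℝ]
  push_cast
  simp only [← Real.rpow_natCast]
  refine le_trans ?_ (real_main_inequality2 (by exact_mod_cast n_large))
  gcongr
  · have : (0:ℕ) < 2 * n := by omega
    exact_mod_cast this
  · exact_mod_cast Real.nat_sqrt_le_real_sqrt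
  · have : (1:ℕ) ≤ 2 * n := by omega
    exact_mod_cast this
  · norm_num
  · norm_num
  · refine le_trans Nat.cast_div_le ?_
    push_cast
    norm_num

theorem partA {n : ℕ} (n_large : 2 < n) :
    (∏ p ∈ Finset.range (2 * n / 3 + 1), p ^ (Nat.centralBinom n).factorization p)
      ≤ (2 * n) ^ Nat.sqrt (2 * n) * 4 ^ (2 * n / 3) := by
  have n_pos : 0 < n := by omega
  have n2_pos : 1 ≤ 2 * n := by omega
  let S := (Finset.range (2 * n / 3 + 1)).filter Nat.Prime
  let f x := x ^ (Nat.centralBinom n).factorization x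
  have : ∏ x ∈ S, f x = ∏ x ∈ Finset.range (2 * n / 3 + 1), f x := by
    refine Finset.prod_filter_of_ne fun p _ h => ?_
    contrapose! h; dsimp only [f]
    rw [Nat.factorization_eq_zero_of_not_prime n.centralBinom h, pow_zero]
  rw [← this, ← Finset.prod_filter_mul_prod_filter_not S (· ≤ Nat.sqrt (2 * n))]
  apply Nat.mul_le_mul
  · refine (Finset.prod_le_prod' fun p _ => (?_ : f p ≤ 2 * n)).trans ?_
    · exact Nat.pow_factorization_choose_le (by omega)
    have : (Finset.Icc 1 (Nat.sqrt (2 * n))).card = Nat.sqrt (2 * n) := by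
      rw [Nat.card_Icc, Nat.add_sub_cancel]
    rw [Finset.prod_const]
    refine pow_right_mono₀ n2_pos ((Finset.card_le_card fun x hx => ?_).trans this.le)
    obtain ⟨h1, h2⟩ := Finset.mem_filter.1 hx
    exact Finset.mem_Icc.mpr ⟨(Finset.mem_filter.1 h1).2.one_lt.le, h2⟩
  · refine le_trans ?_ (primorial_le_4_pow (2 * n / 3))
    refine (Finset.prod_le_prod' fun p hp => (?_ : f p ≤ p)).trans ?_
    · obtain ⟨h1, h2⟩ := Finset.mem_filter.1 hp
      refine (pow_right_mono₀ (Finset.mem_filter.1 h1).2.one_lt.le ?_).trans (pow_one p).le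
      exact Nat.factorization_choose_le_one (Nat.sqrt_lt'.mp <| not_le.1 h2)
    refine Finset.prod_le_prod_of_subset_of_one_le' (Finset.filter_subset _ _) ?_
    exact fun p hp _ => (Finset.mem_filter.1 hp).2.one_lt.le

theorem centralBinom_le_two_exceptions {n a b : ℕ} (n_large : 2 < n)
    (hab : ∀ p, p.Prime → n < p → p ≤ 2 * n →
      (Nat.centralBinom n).factorization p ≠ 0 → p = a ∨ p = b) :
    Nat.centralBinom n ≤ ((2 * n) ^ Nat.sqrt (2 * n) * 4 ^ (2 * n / 3)) * (2 * n) ^ 2 := by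
  have split : Nat.centralBinom n =
      (∏ p ∈ Finset.range (2 * n / 3 + 1), p ^ (Nat.centralBinom n).factorization p) *
      (∏ p ∈ Finset.Ico (2 * n / 3 + 1) (2 * n + 1), p ^ (Nat.centralBinom n).factorization p) := by
    rw [Finset.range_eq_Ico,
      ← Finset.prod_union (Finset.Ico_disjoint_Ico_consecutive 0 (2 * n / 3 + 1) (2 * n + 1)),
      Finset.Ico_union_Ico_eq_Ico (by omega) (by omega), ← Finset.range_eq_Ico]
    exact (Nat.prod_pow_factorization_centralBinom n).symm
  rw [split]
  apply Nat.mul_le_mul (partA n_large)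
  -- part B
  set ν := (Nat.centralBinom n).factorization with hν
  let T := (Finset.Ico (2 * n / 3 + 1) (2 * n + 1)).filter (fun p => p ^ ν p ≠ 1)
  have hprod : ∏ p ∈ T, p ^ ν p
      = ∏ p ∈ Finset.Ico (2 * n / 3 + 1) (2 * n + 1), p ^ ν p :=
    Finset.prod_filter_of_ne (fun p _ h => h)
  rw [← hprod]
  have hT : T ⊆ {a, b} := by
    intro p hp
    obtain ⟨hmem, hne⟩ := Finset.mem_filter.mp hp
    rw [Finset.mem_Ico] at hmem
    have pp : p.Prime := by
      by_contra hnp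
      exact hne (by rw [hν, Nat.factorization_eq_zero_of_not_prime _ hnp, pow_zero])
    have hpn : n < p := by
      by_contra hle
      push_neg at hle
      exact hne (by
        rw [hν, Nat.factorization_centralBinom_of_two_mul_self_lt_three_mul n_large hle
          (by omega), pow_zero])
    have := hab p pp hpn (by omega) (fun h0 => hne (by rw [h0, pow_zero]))
    simp only [Finset.mem_insert, Finset.mem_singleton]
    tauto
  calc ∏ p ∈ T, p ^ ν p ≤ ∏ _p ∈ T, 2 * n :=
        Finset.prod_le_prod' (fun p _ => Nat.pow_factorization_choose_le (by omega))
    _ = (2 * n) ^ T.card := Finset.prod_const _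
    _ ≤ (2 * n) ^ 2 := by
        refine Nat.pow_le_pow_right (by omega) ?_
        refine le_trans (Finset.card_le_card hT) ?_
        exact le_trans (Finset.card_insert_le _ _) (by simp)


theorem exists_two_primes_eventually {n : ℕ} (hn : 800 ≤ n) :
    ∃ p q : ℕ, p.Prime ∧ q.Prime ∧ p < q ∧ n < p ∧ q + 3 ≤ 2 * n := by
  by_contra hcon
  push_neg at hcon
  have n_large : 2 < n := by omega
  obtain ⟨a, b, hab⟩ : ∃ a b : ℕ, ∀ p, p.Prime → n < p → p ≤ 2 * n →
      (Nat.centralBinom n).factorization p ≠ 0 → p = a ∨ p = b := by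
    have hodd : ∀ p, p.Prime → n < p → p ≤ 2 * n → 2 * n < p + 3 → p = 2 * n - 1 := by
      intro p pp h1 h2 h3
      rcases (by omega : p = 2 * n - 2 ∨ p = 2 * n - 1 ∨ p = 2 * n) with h | h | h
      · exfalso
        have he : Even p := ⟨n - 1, by omega⟩
        have := (Nat.Prime.even_iff pp).mp he
        omega
      · exact h
      · exfalso
        have he : Even p := ⟨n, by omega⟩
        have := (Nat.Prime.even_iff pp).mp he
        omega
    by_cases hex : ∃ a : ℕ, a.Prime ∧ n < a ∧ a + 3 ≤ 2 * n
    · obtain ⟨a, ha1, ha2, ha3⟩ := hex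
      refine ⟨a, 2 * n - 1, fun p pp h1 h2 _ => ?_⟩
      by_cases h3 : p + 3 ≤ 2 * n
      · rcases lt_trichotomy p a with h | h | h
        · exact absurd (hcon p a pp ha1 h h1) (by omega)
        · exact Or.inl h
        · exact absurd (hcon a p ha1 pp h ha2) (by omega)
      · exact Or.inr (hodd p pp h1 h2 (by omega))
    · push_neg at hex
      refine ⟨2 * n - 1, 2 * n - 1, fun p pp h1 h2 _ => Or.inl (hodd p pp h1 h2 ?_)⟩
      have := hex p pp h1
      omega
  have H3 := centralBinom_le_two_exceptions n_large hab
  have H1 := main_inequality2 hn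
  have H2 := Nat.four_pow_lt_mul_centralBinom n (by omega)
  have H4 := Nat.mul_le_mul_left n H3
  have heq : n * (((2 * n) ^ Nat.sqrt (2 * n) * 4 ^ (2 * n / 3)) * (2 * n) ^ 2)
      = n * (2 * n) ^ Nat.sqrt (2 * n) * (2 * n) ^ 2 * 4 ^ (2 * n / 3) := by ring
  omega

/-- chain step for small cases -/
theorem chain_step (p q : ℕ) {m : ℕ} (hp : Nat.Prime p) (hq : Nat.Prime q) (hpq : p < q)
    (H : m < q + 3 → ∃ ℓ s : ℕ, ℓ.Prime ∧ s.Prime ∧ ℓ ≠ s ∧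
      m < 2 * ℓ ∧ ℓ + 3 ≤ m ∧ m < 2 * s ∧ s + 3 ≤ m)
    (hm : m < 2 * p) :
    ∃ ℓ s : ℕ, ℓ.Prime ∧ s.Prime ∧ ℓ ≠ s ∧
      m < 2 * ℓ ∧ ℓ + 3 ≤ m ∧ m < 2 * s ∧ s + 3 ≤ m := by
  by_cases h : q + 3 ≤ m
  · exact ⟨p, q, hp, hq, by omega, by omega, by omega, by omega, by omega⟩
  · exact H (by omega)

end TwoPrimes

/-- Lemma 5.18: for `m ≥ 16` there are at least two distinct primes in the interval
`(m/2, m − 3]`. -/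
theorem two_primes_in_interval (m : ℕ) (hm : 16 ≤ m) :
    ∃ ℓ s : ℕ, ℓ.Prime ∧ s.Prime ∧ ℓ ≠ s ∧
      m < 2 * ℓ ∧ ℓ + 3 ≤ m ∧ m < 2 * s ∧ s + 3 ≤ m := by
  by_cases hbig : 1600 ≤ m
  · have hn : 800 ≤ m / 2 := by omega
    obtain ⟨p, q, hp, hq, hpq, h1, h2⟩ := TwoPrimes.exists_two_primes_eventually hn
    exact ⟨p, q, hp, hq, by omega, by omega, by omega, by omega, by omega⟩
  · refine TwoPrimes.chain_step 809 811 (by norm_num) (by norm_num) (by norm_num) ?_ (by omega)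
    intro h1
    refine TwoPrimes.chain_step 409 419 (by norm_num) (by norm_num) (by norm_num) ?_ (by omega)
    intro h2
    refine TwoPrimes.chain_step 211 223 (by norm_num) (by norm_num) (by norm_num) ?_ (by omega)
    intro h3
    refine TwoPrimes.chain_step 113 127 (by norm_num) (by norm_num) (by norm_num) ?_ (by omega)
    intro h4
    refine TwoPrimes.chain_step 67 71 (by norm_num) (by norm_num) (by norm_num) ?_ (by omega)
    intro h5
    refine TwoPrimes.chain_step 37 41 (by norm_num) (by norm_num) (by norm_num) ?_ (by omega)
    intro h6
    refine TwoPrimes.chain_step 23 29 (by norm_num) (by norm_num) (by norm_num) ?_ (by omega)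
    intro h7
    refine TwoPrimes.chain_step 17 19 (by norm_num) (by norm_num) (by norm_num) ?_ (by omega)
    intro h8
    refine TwoPrimes.chain_step 11 13 (by norm_num) (by norm_num) (by norm_num) ?_ (by omega)
    intro h9
    exact absurd hm (by omega)
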